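/- Let P ⊆ ℝ be an open interval, ω : P → ℝ a C¹ function, f : ℝ × P → ℝ a C¹ function, ε ≠ 0, and define T(x,y) = (x + ω(y), y + ε f(x,y)) on ℝ × P. If T is area-preserving, i.e. det DT(x,y) = 1 + ε ∂f/∂y(x,y) − ω'(y) ε ∂f/∂x(x,y) = 1 for all (x,y) ∈ ℝ × P, then f is constant along the curves x + ω(y) = const: there exists a function g : ℝ → ℝ such that f(x,y) = g(x + ω(y)) for all (x,y) ∈ ℝ × P. Consequently the perturbation necessarily has the form f(x,y) = g(F_y(x)) where F_y(x) = x + ω(y). -/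

import Mathlib

/-!
STATEMENT 13: Let P ⊆ ℝ be an open interval, ω : P → ℝ a C¹ function,
f : ℝ × P → ℝ a C¹ function, ε ≠ 0, and T(x,y) = (x + ω(y), y + ε f(x,y)).
If T is area-preserving, i.e. det DT = 1 + ε f_y − ω'(y) ε f_x = 1 everywhere,
then f is constant along the curves x + ω(y) = const: there is g : ℝ → ℝ with
f(x,y) = g(x + ω(y)) for all (x,y) ∈ ℝ × P, i.e. f(x,y) = g(F_y(x)).
-/

open Set

theorem area_preserving_perturbation_form
    (P : Set ℝ) (hPopen : IsOpen P) (hPconn : P.OrdConnected)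
    (ω : ℝ → ℝ) (hω : ContDiffOn ℝ 1 ω P)
    (f : ℝ → ℝ → ℝ)
    (hf : ContDiffOn ℝ 1 (fun p : ℝ × ℝ => f p.1 p.2) (Set.univ ×ˢ P))
    (ε : ℝ) (hε : ε ≠ 0)
    (harea : ∀ x : ℝ, ∀ y ∈ P,
      1 + ε * deriv (fun y' => f x y') y
        - deriv ω y * (ε * deriv (fun x' => f x' y) x) = 1) :
    ∃ g : ℝ → ℝ, ∀ x : ℝ, ∀ y ∈ P, f x y = g (x + ω y) := by
  rcases P.eq_empty_or_nonempty with rfl | ⟨y₀, hy₀⟩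
  · exact ⟨fun _ => 0, fun x y hy => absurd hy (notMem_empty y)⟩
  have hU : IsOpen ((Set.univ : Set ℝ) ×ˢ P) := isOpen_univ.prod hPopen
  set F : ℝ × ℝ → ℝ := fun p => f p.1 p.2 with hF
  have hFdiff : ∀ p ∈ (Set.univ : Set ℝ) ×ˢ P, DifferentiableAt ℝ F p := by
    intro p hp
    have := (hf.differentiableOn one_ne_zero).differentiableAt (hU.mem_nhds hp)
    exact this
  have hωdiff : ∀ t ∈ P, HasDerivAt ω (deriv ω t) t := by
    intro t ht
    exact ((hω.differentiableOn one_ne_zero).differentiableAt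
      (hPopen.mem_nhds ht)).hasDerivAt
  -- key: for each point, partial derivatives relate to fderiv
  have key : ∀ c : ℝ, ∀ t ∈ P, HasDerivAt (fun s => f (c - ω s) s) 0 t := by
    intro c t ht
    set p : ℝ × ℝ := (c - ω t, t) with hp
    have hpU : p ∈ (Set.univ : Set ℝ) ×ˢ P := ⟨mem_univ _, ht⟩
    have hFp := hFdiff p hpU
    set L := fderiv ℝ F p with hL
    -- partial derivatives
    have h1 : HasDerivAt (fun x' => f x' t) (L (1, 0)) (c - ω t) := by
      have hi : HasDerivAt (fun x' : ℝ => (x', t)) ((1 : ℝ), (0 : ℝ)) (c - ω t) := by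
        have := ((hasDerivAt_id (c - ω t)).prodMk (hasDerivAt_const (c - ω t) t))
        simpa using this
      exact (hFp.hasFDerivAt.comp_hasDerivAt (c - ω t) hi)
    have h2 : HasDerivAt (fun y' => f (c - ω t) y') (L (0, 1)) t := by
      have hi : HasDerivAt (fun y' : ℝ => ((c - ω t), y')) ((0 : ℝ), (1 : ℝ)) t := by
        have := ((hasDerivAt_const t (c - ω t)).prodMk (hasDerivAt_id t))
        simpa using this
      exact (hFp.hasFDerivAt.comp_hasDerivAt t hi)
    -- the area condition at (c - ω t, t)
    have harea' := harea (c - ω t) t ht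
    rw [h1.deriv] at harea'
    rw [h2.deriv] at harea'
    have hzero : L (0, 1) - deriv ω t * L (1, 0) = 0 := by
      have : ε * (L (0, 1) - deriv ω t * L (1, 0)) = 0 := by ring_nf; linarith [harea']
      rcases mul_eq_zero.mp this with h | h
      · exact absurd h hε
      · exact h
    -- chain rule for s ↦ f (c - ω s) s
    have hi : HasDerivAt (fun s : ℝ => ((c - ω s), s)) ((-(deriv ω t)), (1 : ℝ)) t := by
      have h01 : HasDerivAt (fun s : ℝ => c - ω s) (-(deriv ω t)) t := by
        have := (hasDerivAt_const t c).sub (hωdiff t ht); rw [zero_sub] at this; exact this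
      exact h01.prodMk (hasDerivAt_id t)
    have hcomp : HasDerivAt (fun s => f (c - ω s) s) (L ((-(deriv ω t)), (1 : ℝ))) t :=
      hFp.hasFDerivAt.comp_hasDerivAt_of_eq t hi rfl
    have hval : L ((-(deriv ω t)), (1 : ℝ)) = 0 := by
      have hsplit : ((-(deriv ω t)), (1 : ℝ)) =
          (-(deriv ω t)) • ((1 : ℝ), (0 : ℝ)) + ((0 : ℝ), (1 : ℝ)) := by
        simp [Prod.ext_iff]
      rw [hsplit, map_add, map_smul]
      simp only [smul_eq_mul]
      linarith [hzero]
    rw [hval] at hcomp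
    exact hcomp
  refine ⟨fun c => f (c - ω y₀) y₀, fun x y hy => ?_⟩
  set c := x + ω y with hc
  have hconst : ∀ t ∈ P, ∀ t' ∈ P,
      f (c - ω t) t = f (c - ω t') t' := by
    intro t ht t' ht'
    have hcv : Convex ℝ P := hPconn.convex
    refine hcv.is_const_of_fderivWithin_eq_zero (𝕜 := ℝ)
      (f := fun s => f (c - ω s) s) ?_ ?_ ht ht'
    · intro s hs
      exact ((key c s hs).differentiableAt.differentiableWithinAt)
    · intro s hs
      have := (key c s hs).hasFDerivAt.hasFDerivWithinAt.fderivWithin (hPopen.uniqueDiffWithinAt hs)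
      rw [this]
      ext
      simp

  have := hconst y hy y₀ hy₀
  simpa [hc] using this
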